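/- Let n, m, r be positive integers, L an n×r real matrix, F an m×r real matrix, e an n×m real matrix, and set W = L·Fᵀ + e. Then for every n×r real matrix U whose columns are orthonormal (UᵀU = I_r), one has ‖W‖_F² − tr(Uᵀ W Wᵀ U) ≥ ‖e‖_F² + 2·tr(L Fᵀ eᵀ) − r·‖e‖² − 2·√r·‖e‖·‖L Fᵀ‖_F. -/

import Mathlib

open Matrix

/-- Frobenius norm of a real matrix. -/
noncomputable def frobNorm {n m : ℕ} (A : Matrix (Fin n) (Fin m) ℝ) : ℝ :=
  Real.sqrt (∑ i, ∑ j, (A i j) ^ 2)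

/-- Spectral (ℓ²→ℓ² operator) norm of a real matrix. -/
noncomputable def specNorm {n m : ℕ} (A : Matrix (Fin n) (Fin m) ℝ) : ℝ :=
  ‖LinearMap.toContinuousLinearMap (Matrix.toEuclideanLin A)‖

namespace Stmt1Aux

/-- Frobenius square sum. -/
noncomputable def fsq {a b : ℕ} (A : Matrix (Fin a) (Fin b) ℝ) : ℝ :=
  ∑ i, ∑ j, (A i j) ^ 2

lemma fsq_nonneg {a b : ℕ} (A : Matrix (Fin a) (Fin b) ℝ) : 0 ≤ fsq A := by
  apply Finset.sum_nonneg; intro i _; apply Finset.sum_nonneg; intro j _; positivity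

lemma fsq_eq_trace {a b : ℕ} (A : Matrix (Fin a) (Fin b) ℝ) :
    fsq A = Matrix.trace (A * Aᵀ) := by
  simp [fsq, Matrix.trace, Matrix.mul_apply, Matrix.diag, sq]

lemma trace_mul_t {a b : ℕ} (A B : Matrix (Fin a) (Fin b) ℝ) :
    Matrix.trace (A * Bᵀ) = ∑ i, ∑ j, A i j * B i j := by
  simp [Matrix.trace, Matrix.mul_apply, Matrix.diag]

lemma cs_sum {ι : Type*} [Fintype ι] (f g : ι → ℝ) :
    ∑ i, f i * g i ≤ Real.sqrt (∑ i, f i ^ 2) * Real.sqrt (∑ i, g i ^ 2) := by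
  have h := Finset.sum_mul_sq_le_sq_mul_sq Finset.univ f g
  calc ∑ i, f i * g i ≤ |∑ i, f i * g i| := le_abs_self _
    _ = Real.sqrt ((∑ i, f i * g i) ^ 2) := (Real.sqrt_sq_eq_abs _).symm
    _ ≤ Real.sqrt ((∑ i, f i ^ 2) * ∑ i, g i ^ 2) := Real.sqrt_le_sqrt h
    _ = _ := Real.sqrt_mul (by positivity) _

lemma mulVec_sq_le {n m : ℕ} (e : Matrix (Fin n) (Fin m) ℝ) (x : Fin m → ℝ) :
    ∑ i, (e.mulVec x i) ^ 2 ≤ specNorm e ^ 2 * ∑ j, (x j) ^ 2 := by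
  have h := (LinearMap.toContinuousLinearMap (Matrix.toEuclideanLin e)).le_opNorm
    ((WithLp.equiv 2 (Fin m → ℝ)).symm x)
  have hx : ‖(WithLp.equiv 2 (Fin m → ℝ)).symm x‖ = Real.sqrt (∑ j, (x j)^2) := by
    rw [EuclideanSpace.norm_eq]
    congr 1; apply Finset.sum_congr rfl; intro j _
    simp [sq_abs, WithLp.equiv_symm_apply, PiLp.toLp_apply, sq]
  have happ : (LinearMap.toContinuousLinearMap (Matrix.toEuclideanLin e))
      ((WithLp.equiv 2 (Fin m → ℝ)).symm x) = (WithLp.equiv 2 (Fin n → ℝ)).symm (e.mulVec x) := by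
    simp [WithLp.equiv_symm_apply, Matrix.toEuclideanLin_apply_piLp_toLp]
  rw [happ, hx] at h
  have hn : ‖(WithLp.equiv 2 (Fin n → ℝ)).symm (e.mulVec x)‖
      = Real.sqrt (∑ i, (e.mulVec x i)^2) := by
    rw [EuclideanSpace.norm_eq]
    congr 1; apply Finset.sum_congr rfl; intro j _
    simp [sq_abs, WithLp.equiv_symm_apply, PiLp.toLp_apply, sq]
  rw [hn] at h
  have h1 : (0:ℝ) ≤ ∑ i, (e.mulVec x i)^2 := by positivity
  have h2 : (0:ℝ) ≤ ∑ j, (x j)^2 := by positivity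
  calc ∑ i, (e.mulVec x i)^2 = Real.sqrt (∑ i, (e.mulVec x i)^2) ^ 2 := (Real.sq_sqrt h1).symm
    _ ≤ (specNorm e * Real.sqrt (∑ j, (x j)^2)) ^ 2 := by
        apply pow_le_pow_left₀ (Real.sqrt_nonneg _) h
    _ = specNorm e ^ 2 * ∑ j, (x j)^2 := by
        rw [mul_pow, Real.sq_sqrt h2]

lemma mulVecT_sq_le {n m : ℕ} (e : Matrix (Fin n) (Fin m) ℝ) (x : Fin n → ℝ) :
    ∑ j, (eᵀ.mulVec x j) ^ 2 ≤ specNorm e ^ 2 * ∑ i, (x i) ^ 2 := by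
  set y := eᵀ.mulVec x with hy
  set q := ∑ j, (y j) ^ 2 with hq
  have hq0 : 0 ≤ q := by positivity
  have hid : q = ∑ i, x i * (e.mulVec y i) := by
    have : ∑ i, x i * (e.mulVec y i) = x ⬝ᵥ e.mulVec y := rfl
    rw [this, Matrix.dotProduct_mulVec, ← Matrix.mulVec_transpose, ← hy]
    simp [dotProduct, hq, sq]
  have hcs : ∑ i, x i * (e.mulVec y i) ≤
      Real.sqrt (∑ i, (x i)^2) * Real.sqrt (∑ i, (e.mulVec y i)^2) := cs_sum _ _
  have hm : Real.sqrt (∑ i, (e.mulVec y i)^2) ≤ Real.sqrt (specNorm e ^ 2 * q) :=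
    Real.sqrt_le_sqrt (mulVec_sq_le e y)
  have hs0 : 0 ≤ specNorm e := norm_nonneg _
  have hr : Real.sqrt (specNorm e ^ 2 * q) = specNorm e * Real.sqrt q := by
    rw [Real.sqrt_mul (by positivity), Real.sqrt_sq hs0]
  set c := specNorm e * Real.sqrt (∑ i, (x i)^2) with hc
  have hc0 : 0 ≤ c := by positivity
  have key : q ≤ c * Real.sqrt q := by
    calc q = ∑ i, x i * (e.mulVec y i) := hid
      _ ≤ Real.sqrt (∑ i, (x i)^2) * Real.sqrt (∑ i, (e.mulVec y i)^2) := hcs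
      _ ≤ Real.sqrt (∑ i, (x i)^2) * (specNorm e * Real.sqrt q) := by
          apply mul_le_mul_of_nonneg_left (hm.trans_eq hr) (Real.sqrt_nonneg _)
      _ = c * Real.sqrt q := by ring
  have hsq : Real.sqrt q ^ 2 = q := Real.sq_sqrt hq0
  have hx2 : Real.sqrt (∑ i, (x i)^2) ^ 2 = ∑ i, (x i)^2 := Real.sq_sqrt (by positivity)
  nlinarith [Real.sqrt_nonneg q, sq_nonneg (Real.sqrt q - c), hsq, key]

lemma contraction {n r b : ℕ} (U : Matrix (Fin n) (Fin r) ℝ) (hU : Uᵀ * U = 1)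
    (A : Matrix (Fin n) (Fin b) ℝ) : fsq (Uᵀ * A) ≤ fsq A := by
  set Q : Matrix (Fin n) (Fin n) ℝ := 1 - U * Uᵀ with hQ
  have hQt : Qᵀ = Q := by simp [hQ, transpose_sub, transpose_mul]
  have hUU : U * Uᵀ * (U * Uᵀ) = U * Uᵀ := by
    rw [Matrix.mul_assoc, ← Matrix.mul_assoc Uᵀ, hU, Matrix.one_mul]
  have hQQ : Q * Q = Q := by
    simp only [hQ, Matrix.sub_mul, Matrix.mul_sub, Matrix.one_mul, Matrix.mul_one, hUU]
    abel
  have key : fsq A - fsq (Uᵀ * A) = Matrix.trace (Aᵀ * (Q * A)) := by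
    rw [fsq_eq_trace, fsq_eq_trace, transpose_mul, transpose_transpose]
    have h1 : Matrix.trace (Uᵀ * A * (Aᵀ * U)) = Matrix.trace (Aᵀ * (U * (Uᵀ * A))) := by
      rw [Matrix.trace_mul_comm, Matrix.mul_assoc]
    rw [h1]
    have h2 : Matrix.trace (A * Aᵀ) = Matrix.trace (Aᵀ * A) := Matrix.trace_mul_comm _ _
    rw [h2, ← Matrix.trace_sub, ← Matrix.mul_sub]
    congr 2
    rw [hQ, Matrix.sub_mul, Matrix.one_mul, Matrix.mul_assoc]
  have habs : Q * (Q * A) = Q * A := by rw [← Matrix.mul_assoc, hQQ]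
  have hpos : 0 ≤ Matrix.trace (Aᵀ * (Q * A)) := by
    have hform : Aᵀ * (Q * A) = (Q * A)ᵀ * ((Q * A)ᵀ)ᵀ := by
      rw [transpose_transpose, transpose_mul, hQt, Matrix.mul_assoc, habs]
    rw [hform, ← fsq_eq_trace]
    exact fsq_nonneg _
  linarith

lemma col_bound {n m r : ℕ} (e : Matrix (Fin n) (Fin m) ℝ)
    (U : Matrix (Fin n) (Fin r) ℝ) (hU : Uᵀ * U = 1) :
    fsq (Uᵀ * e) ≤ (r : ℝ) * specNorm e ^ 2 := by
  have hcol : ∀ k : Fin r, ∑ j, ((Uᵀ * e) k j) ^ 2 ≤ specNorm e ^ 2 := by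
    intro k
    have hent : ∀ j, (Uᵀ * e) k j = eᵀ.mulVec (fun i => U i k) j := by
      intro j
      simp [Matrix.mul_apply, Matrix.mulVec, dotProduct, Matrix.transpose_apply,
        mul_comm]
    have hnorm : ∑ i, (U i k) ^ 2 = 1 := by
      have : (Uᵀ * U) k k = (1 : Matrix (Fin r) (Fin r) ℝ) k k := by rw [hU]
      simpa [Matrix.mul_apply, Matrix.one_apply, sq] using this
    calc ∑ j, ((Uᵀ * e) k j) ^ 2 = ∑ j, (eᵀ.mulVec (fun i => U i k) j) ^ 2 := by
          apply Finset.sum_congr rfl; intro j _; rw [hent]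
      _ ≤ specNorm e ^ 2 * ∑ i, (U i k) ^ 2 := mulVecT_sq_le e _
      _ = specNorm e ^ 2 := by rw [hnorm, mul_one]
  calc fsq (Uᵀ * e) = ∑ k, ∑ j, ((Uᵀ * e) k j) ^ 2 := rfl
    _ ≤ ∑ _k : Fin r, specNorm e ^ 2 := Finset.sum_le_sum (fun k _ => hcol k)
    _ = (r : ℝ) * specNorm e ^ 2 := by simp [mul_comm]

lemma fsq_add {a b : ℕ} (X Y : Matrix (Fin a) (Fin b) ℝ) :
    fsq (X + Y) = fsq X + 2 * (∑ i, ∑ j, X i j * Y i j) + fsq Y := by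
  simp only [fsq, Matrix.add_apply, add_sq, Finset.sum_add_distrib, Finset.mul_sum,
    mul_assoc]

lemma frob_cs {a b : ℕ} (X Y : Matrix (Fin a) (Fin b) ℝ) :
    ∑ i, ∑ j, X i j * Y i j ≤ Real.sqrt (fsq X) * Real.sqrt (fsq Y) := by
  have h := cs_sum (fun p : Fin a × Fin b => X p.1 p.2) (fun p : Fin a × Fin b => Y p.1 p.2)
  simpa [Fintype.sum_prod_type, fsq] using h

end Stmt1Aux

open Stmt1Aux in
theorem stmt1 (n m r : ℕ) (hn : 0 < n) (hm : 0 < m) (hr : 0 < r)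
    (L : Matrix (Fin n) (Fin r) ℝ) (F : Matrix (Fin m) (Fin r) ℝ)
    (e : Matrix (Fin n) (Fin m) ℝ) (W : Matrix (Fin n) (Fin m) ℝ)
    (hW : W = L * Fᵀ + e)
    (U : Matrix (Fin n) (Fin r) ℝ) (hU : Uᵀ * U = 1) :
    frobNorm W ^ 2 - Matrix.trace (Uᵀ * W * Wᵀ * U) ≥
      frobNorm e ^ 2 + 2 * Matrix.trace (L * Fᵀ * eᵀ)
        - (r : ℝ) * specNorm e ^ 2 - 2 * Real.sqrt r * specNorm e * frobNorm (L * Fᵀ) := by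
  set A := L * Fᵀ with hA
  have hs0 : 0 ≤ specNorm e := norm_nonneg _
  -- frobNorm squared = fsq
  have hfW : frobNorm W ^ 2 = fsq W := Real.sq_sqrt (fsq_nonneg W)
  have hfe : frobNorm e ^ 2 = fsq e := Real.sq_sqrt (fsq_nonneg e)
  have hfA : frobNorm A = Real.sqrt (fsq A) := rfl
  -- trace (Uᵀ W Wᵀ U) = fsq (Uᵀ W)
  have htr : Matrix.trace (Uᵀ * W * Wᵀ * U) = fsq (Uᵀ * W) := by
    rw [fsq_eq_trace, transpose_mul, transpose_transpose, Matrix.mul_assoc]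
  -- trace (A eᵀ) as sum
  have htr2 : Matrix.trace (A * eᵀ) = ∑ i, ∑ j, A i j * e i j := trace_mul_t A e
  -- expansions
  have hWexp : fsq W = fsq A + 2 * (∑ i, ∑ j, A i j * e i j) + fsq e := by
    rw [hW, fsq_add]
  have hUW : Uᵀ * W = Uᵀ * A + Uᵀ * e := by rw [hW, Matrix.mul_add]
  have hUWexp : fsq (Uᵀ * W) = fsq (Uᵀ * A)
      + 2 * (∑ k, ∑ j, (Uᵀ * A) k j * (Uᵀ * e) k j) + fsq (Uᵀ * e) := by
    rw [hUW, fsq_add]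
  -- bounds
  have h1 : fsq (Uᵀ * A) ≤ fsq A := contraction U hU A
  have h2 : fsq (Uᵀ * e) ≤ (r : ℝ) * specNorm e ^ 2 := col_bound e U hU
  have h3 : ∑ k, ∑ j, (Uᵀ * A) k j * (Uᵀ * e) k j ≤
      Real.sqrt (fsq (Uᵀ * A)) * Real.sqrt (fsq (Uᵀ * e)) := frob_cs _ _
  have h4 : Real.sqrt (fsq (Uᵀ * A)) ≤ Real.sqrt (fsq A) := Real.sqrt_le_sqrt h1
  have h5 : Real.sqrt (fsq (Uᵀ * e)) ≤ Real.sqrt r * specNorm e := by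
    calc Real.sqrt (fsq (Uᵀ * e)) ≤ Real.sqrt ((r : ℝ) * specNorm e ^ 2) :=
          Real.sqrt_le_sqrt h2
      _ = Real.sqrt r * specNorm e := by
          rw [Real.sqrt_mul (by positivity), Real.sqrt_sq hs0]
  have h6 : Real.sqrt (fsq (Uᵀ * A)) * Real.sqrt (fsq (Uᵀ * e)) ≤
      Real.sqrt (fsq A) * (Real.sqrt r * specNorm e) :=
    mul_le_mul h4 h5 (Real.sqrt_nonneg _) (Real.sqrt_nonneg _)
  have h7 : ∑ k, ∑ j, (Uᵀ * A) k j * (Uᵀ * e) k j ≤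
      Real.sqrt (fsq A) * (Real.sqrt r * specNorm e) := h3.trans h6
  rw [ge_iff_le, hfW, hfe, hfA, htr, htr2, hWexp, hUWexp]
  nlinarith [h1, h2, h7]
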